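/- Let F ∈ ℝ^{n×n} be a nonnegative matrix, λ an eigenvalue of F with eigenvector x, and suppose F has zero diagonal. Let p be an index maximizing |x_i| and q an index maximizing |x_i| over i ≠ p. Then |λ|·|x_p| ≤ Λ_p[F]·|x_q| and |λ|·|x_q| ≤ Λ_q[F]·|x_p|; consequently |λ|² ≤ Λ_p[F]·Λ_q[F]. -/

import Mathlib

/-- The two-largest-components eigenvector estimate: let `F` (`n ≥ 2`) be
nonnegative with zero diagonal, `λ` a complex eigenvalue of `F` with nonzero
eigenvector `x`, `p` an index maximizing `|x i|` and `q ≠ p` maximizing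
`|x i|` over `i ≠ p`.  Then `|λ||x p| ≤ Λ_p[F]·|x q|` and
`|λ||x q| ≤ Λ_q[F]·|x p|`; consequently `|λ|² ≤ Λ_p[F]·Λ_q[F]`. -/
theorem eigenvalue_two_row_bound {n : ℕ} (hn : 2 ≤ n)
    (F : Matrix (Fin n) (Fin n) ℝ)
    (hnn : ∀ i j, 0 ≤ F i j) (hdiag : ∀ i, F i i = 0)
    (lam : ℂ) (x : Fin n → ℂ) (hx : x ≠ 0)
    (heig : (F.map (fun a => (a : ℂ))).mulVec x = lam • x)
    (p q : Fin n) (hpq : q ≠ p)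
    (hp : ∀ i, ‖x i‖ ≤ ‖x p‖)
    (hq : ∀ i, i ≠ p → ‖x i‖ ≤ ‖x q‖) :
    ‖lam‖ * ‖x p‖ ≤ (∑ j, F p j) * ‖x q‖ ∧
      ‖lam‖ * ‖x q‖ ≤ (∑ j, F q j) * ‖x p‖ ∧
      ‖lam‖ ^ 2 ≤ (∑ j, F p j) * (∑ j, F q j) := by
  have key : ∀ i : Fin n, lam * x i = ∑ j, (F i j : ℂ) * x j := by
    intro i
    have := congrFun heig i
    simpa [Matrix.mulVec, dotProduct, Matrix.map_apply] using this.symm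
  have est : ∀ (i : Fin n) (c : ℝ), 0 ≤ c → (∀ j, j ≠ i → ‖x j‖ ≤ c) →
      ‖lam‖ * ‖x i‖ ≤ (∑ j, F i j) * c := by
    intro i c hc0 hc
    calc ‖lam‖ * ‖x i‖ = ‖lam * x i‖ := (norm_mul _ _).symm
      _ = ‖∑ j, (F i j : ℂ) * x j‖ := by rw [key i]
      _ ≤ ∑ j, ‖(F i j : ℂ) * x j‖ := norm_sum_le _ _
      _ ≤ ∑ j, F i j * c := by
          apply Finset.sum_le_sum
          intro j _
          rcases eq_or_ne j i with rfl | hji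
          · simp [hdiag j]
          · rw [norm_mul, Complex.norm_real, Real.norm_of_nonneg (hnn i j)]
            exact mul_le_mul_of_nonneg_left (hc j hji) (hnn i j)
      _ = (∑ j, F i j) * c := (Finset.sum_mul _ _ _).symm
  have hxp0 : 0 < ‖x p‖ := by
    rw [norm_pos_iff]
    intro h
    apply hx
    funext j
    have := hp j
    rw [h] at this
    simpa using norm_eq_zero.mp (le_antisymm (by simpa using this) (norm_nonneg _))
  have h1 : ‖lam‖ * ‖x p‖ ≤ (∑ j, F p j) * ‖x q‖ :=
    est p _ (norm_nonneg _) (fun j hj => hq j hj)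
  have h2 : ‖lam‖ * ‖x q‖ ≤ (∑ j, F q j) * ‖x p‖ :=
    est q _ (norm_nonneg _) (fun j _ => hp j)
  refine ⟨h1, h2, ?_⟩
  rcases eq_or_lt_of_le (norm_nonneg (x q)) with hq0 | hq0
  · have : ‖lam‖ * ‖x p‖ ≤ 0 := by
      rw [← hq0] at h1; simpa using h1
    have hl : ‖lam‖ = 0 := by
      by_contra h
      have := mul_pos (lt_of_le_of_ne (norm_nonneg lam) (Ne.symm h)) hxp0
      linarith
    rw [hl]
    have hs : (0:ℝ) ≤ (∑ j, F p j) * (∑ j, F q j) :=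
      mul_nonneg (Finset.sum_nonneg fun j _ => hnn p j) (Finset.sum_nonneg fun j _ => hnn q j)
    simpa using hs
  · have hprod := mul_le_mul h1 h2 (mul_nonneg (norm_nonneg _) (norm_nonneg _))
      (mul_nonneg (Finset.sum_nonneg fun j _ => hnn p j) (norm_nonneg _))
    have hpos : 0 < ‖x p‖ * ‖x q‖ := mul_pos hxp0 hq0
    nlinarith [norm_nonneg lam]
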